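/- The Hilbert curve indexing satisfies a discrete locality (Hölder-type) bound: for the k-th iteration map h : {0,...,4^k−1} → {0,...,2^k−1}², there exists a constant C (independent of k) such that ‖h(m) − h(m')‖₂ ≤ C·√(|m − m'|) for all m, m'. -/

import Mathlib

/-- The `k`-th iteration Hilbert curve indexing of the `2^k × 2^k` grid
(standard recursive construction). -/
def hilbert : ℕ → ℕ → ℕ × ℕ
  | 0, _ => (0, 0)
  | k + 1, m =>
    let q := m / 4 ^ k
    let (x, y) := hilbert k (m % 4 ^ k)
    let s := 2 ^ k
    if q = 0 then (y, x)
    else if q = 1 then (x, y + s)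
    else if q = 2 then (x + s, y + s)
    else (2 * s - 1 - y, s - 1 - x)


lemma hilbert_succ (k m : ℕ) : hilbert (k+1) m =
    if m / 4^k = 0 then ((hilbert k (m % 4^k)).2, (hilbert k (m % 4^k)).1)
    else if m / 4^k = 1 then ((hilbert k (m % 4^k)).1, (hilbert k (m % 4^k)).2 + 2^k)
    else if m / 4^k = 2 then ((hilbert k (m % 4^k)).1 + 2^k, (hilbert k (m % 4^k)).2 + 2^k)
    else (2 * 2^k - 1 - (hilbert k (m % 4^k)).2, 2^k - 1 - (hilbert k (m % 4^k)).1) := by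
  simp only [hilbert]

lemma hilbert_lt : ∀ k m, (hilbert k m).1 < 2^k ∧ (hilbert k m).2 < 2^k := by
  intro k
  induction k with
  | zero => intro m; simp [hilbert]
  | succ k ih =>
    intro m
    obtain ⟨hx, hy⟩ := ih (m % 4^k)
    rw [hilbert_succ]
    split_ifs <;> constructor <;> simp <;> omega

lemma hilbert_zero : ∀ k, hilbert k 0 = (0, 0) := by
  intro k
  induction k with
  | zero => simp [hilbert]
  | succ k ih => rw [hilbert_succ]; simp [ih]

lemma hilbert_last : ∀ k, hilbert k (4^k - 1) = (2^k - 1, 0) := by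
  intro k
  induction k with
  | zero => simp [hilbert]
  | succ k ih =>
    have h4 : 0 < 4^k := Nat.pow_pos (by norm_num)
    have hq : (4^(k+1) - 1) / 4^k = 3 := by
      apply Nat.div_eq_of_lt_le <;> rw [pow_succ] <;> omega
    have hr : (4^(k+1) - 1) % 4^k = 4^k - 1 := by
      have : 4^(k+1) - 1 = 3 * 4^k + (4^k - 1) := by rw [pow_succ]; omega
      rw [this, Nat.mul_add_mod']
      exact Nat.mod_eq_of_lt (by omega)
    rw [hilbert_succ, hq, hr, ih]
    simp
    rw [pow_succ]; omega

lemma hilbert_adj : ∀ k m, m + 1 < 4^k →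
    |((hilbert k (m+1)).1 : ℤ) - ((hilbert k m).1 : ℤ)| ≤ 1 ∧
    |((hilbert k (m+1)).2 : ℤ) - ((hilbert k m).2 : ℤ)| ≤ 1 := by
  intro k
  induction k with
  | zero => intro m h; simp at h
  | succ k ih =>
    intro m h
    have h4 : 0 < 4^k := Nat.pow_pos (by norm_num)
    have e : 4^k * (m / 4^k) + m % 4^k = m := Nat.div_add_mod m (4^k)
    by_cases hb : m % 4^k + 1 < 4^k
    · -- interior of a quadrant
      have hm1 : (m+1) % 4^k = m % 4^k + 1 := by
        conv_lhs => rw [← e]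
        rw [add_assoc, Nat.mul_add_mod]
        exact Nat.mod_eq_of_lt hb
      have hd1 : (m+1) / 4^k = m / 4^k := by
        conv_lhs => rw [← e]
        rw [add_assoc, Nat.mul_add_div h4, Nat.div_eq_of_lt hb, Nat.add_zero]
      obtain ⟨ihx, ihy⟩ := ih (m % 4^k) (by omega)
      obtain ⟨bx, by'⟩ := hilbert_lt k (m % 4^k)
      obtain ⟨bx', by''⟩ := hilbert_lt k (m % 4^k + 1)
      rw [hilbert_succ, hilbert_succ, hm1, hd1]
      split_ifs <;> constructor <;> push_cast [Nat.cast_sub (by omega : (hilbert k (m % 4^k)).2 ≤ 2 * 2^k - 1), Nat.cast_sub (by omega : (hilbert k (m % 4^k + 1)).2 ≤ 2 * 2^k - 1), Nat.cast_sub (by omega : (hilbert k (m % 4^k)).1 ≤ 2^k - 1), Nat.cast_sub (by omega : (hilbert k (m % 4^k + 1)).1 ≤ 2^k - 1)] <;>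
        first
        | simpa using ihx
        | simpa using ihy
        | (rw [show ∀ a b c : ℤ, a - b - (a - c) = c - b from fun a b c => by ring, abs_sub_comm]
           first | exact ihx | exact ihy)
    · -- quadrant boundary
      have hm : m % 4^k = 4^k - 1 := by omega
      have hm1 : (m+1) % 4^k = 0 := by
        conv_lhs => rw [← e, hm]
        rw [show 4^k * (m / 4^k) + (4^k - 1) + 1 = 4^k * (m / 4^k + 1) from by rw [Nat.mul_add]; omega]
        exact Nat.mul_mod_right _ _
      have hd1 : (m+1) / 4^k = m / 4^k + 1 := by
        conv_lhs => rw [← e, hm]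
        rw [show 4^k * (m / 4^k) + (4^k - 1) + 1 = 4^k * (m / 4^k + 1) from by rw [Nat.mul_add]; omega]
        exact Nat.mul_div_cancel_left _ h4
      have hqle : m / 4^k ≤ 2 := by
        by_contra hq3
        have : 3 ≤ m / 4^k := by omega
        have : 4^k * 3 ≤ 4^k * (m / 4^k) := Nat.mul_le_mul_left _ this
        have h44 : (4:ℕ)^(k+1) = 4^k * 4 := by rw [pow_succ]
        omega
      have h2 : (0:ℤ) < 2^k := by positivity
      rw [hilbert_succ, hilbert_succ, hm1, hd1, hm, hilbert_zero, hilbert_last]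
      set q := m / 4^k with hqdef
      interval_cases q <;> simp <;> (try constructor) <;>
        push_cast [Nat.cast_sub (show 1 ≤ 2^k from Nat.one_le_two_pow),
          Nat.cast_sub (show 1 ≤ 2*2^k from by have := Nat.one_le_two_pow (n := k); omega)] <;>
        rw [abs_le] <;> constructor <;> push_cast <;> linarith

lemma hilbert_block : ∀ k j m m', j ≤ k → m < 4^k → m' < 4^k → m / 4^j = m' / 4^j →
    |((hilbert k m).1 : ℤ) - ((hilbert k m').1 : ℤ)| < 2^j ∧
    |((hilbert k m).2 : ℤ) - ((hilbert k m').2 : ℤ)| < 2^j := by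
  intro k
  induction k with
  | zero =>
    intro j m m' hj hm hm' _
    interval_cases j
    interval_cases m
    interval_cases m'
    simp
  | succ k ih =>
    intro j m m' hj hm hm' hdiv
    obtain ⟨bx, by1⟩ := hilbert_lt (k+1) m
    obtain ⟨bx', by1'⟩ := hilbert_lt (k+1) m'
    rcases Nat.lt_or_ge j (k+1) with hjk | hjk
    swap
    · -- j = k+1 : trivial from coordinate bounds
      have hj1 : j = k + 1 := le_antisymm hj hjk
      subst hj1
      rw [show (2:ℤ)^(k+1) = ((2^(k+1) : ℕ) : ℤ) from by push_cast; ring]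
      constructor <;> rw [abs_lt] <;> constructor <;>
        [skip; skip; skip; skip] <;>
        omega
    · have hjk' : j ≤ k := by omega
      have h4 : 0 < 4^k := Nat.pow_pos (by norm_num)
      have hsplit : (4:ℕ)^k = 4^j * 4^(k-j) := by rw [← pow_add]; congr 1; omega
      have hq : m / 4^(k) = m' / 4^(k) := by
        rw [hsplit, ← Nat.div_div_eq_div_mul, ← Nat.div_div_eq_div_mul, hdiv]
      have hr : (m % 4^k) / 4^j = (m' % 4^k) / 4^j := by
        rw [hsplit, Nat.mod_mul_right_div_self, Nat.mod_mul_right_div_self, hdiv]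
      obtain ⟨ihx, ihy⟩ := ih j (m % 4^k) (m' % 4^k) hjk' (Nat.mod_lt _ h4) (Nat.mod_lt _ h4) hr
      obtain ⟨cx, cy⟩ := hilbert_lt k (m % 4^k)
      obtain ⟨cx', cy'⟩ := hilbert_lt k (m' % 4^k)
      rw [hilbert_succ, hilbert_succ, ← hq]
      split_ifs <;> constructor <;>
        push_cast [Nat.cast_sub (by omega : (hilbert k (m % 4^k)).2 ≤ 2 * 2^k - 1),
          Nat.cast_sub (by omega : (hilbert k (m' % 4^k)).2 ≤ 2 * 2^k - 1),
          Nat.cast_sub (by omega : (hilbert k (m % 4^k)).1 ≤ 2^k - 1),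
          Nat.cast_sub (by omega : (hilbert k (m' % 4^k)).1 ≤ 2^k - 1)] <;>
        first
        | simpa using ihx
        | simpa using ihy
        | (rw [show ∀ a b c : ℤ, a - b - (a - c) = c - b from fun a b c => by ring, abs_sub_comm]
           first | exact ihx | exact ihy)

lemma hilbert_close (k j m m' : ℕ) (hj : j ≤ k) (hle : m ≤ m') (hm' : m' < 4^k)
    (hd : m' - m ≤ 4^j) :
    |((hilbert k m).1 : ℤ) - ((hilbert k m').1 : ℤ)| ≤ 2^(j+1) ∧
    |((hilbert k m).2 : ℤ) - ((hilbert k m').2 : ℤ)| ≤ 2^(j+1) := by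
  have h4 : 0 < 4^j := Nat.pow_pos (by norm_num)
  have hm : m < 4^k := lt_of_le_of_lt hle hm'
  have e : 4^j * (m / 4^j) + m % 4^j = m := Nat.div_add_mod m (4^j)
  have e' : 4^j * (m' / 4^j) + m' % 4^j = m' := Nat.div_add_mod m' (4^j)
  have hmod : m % 4^j < 4^j := Nat.mod_lt _ h4
  have hmod' : m' % 4^j < 4^j := Nat.mod_lt _ h4
  have ha : m / 4^j ≤ m' / 4^j := Nat.div_le_div_right hle
  have hd' : m' ≤ m + 4^j := by omega
  have ha' : m' / 4^j ≤ m / 4^j + 1 := by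
    by_contra hcon
    push_neg at hcon
    have h1 : 4^j * (m/4^j + 2) ≤ 4^j * (m'/4^j) := Nat.mul_le_mul_left _ (by omega)
    have h2 : 4^j * (m/4^j + 2) = 4^j*(m/4^j) + 4^j + 4^j := by ring
    omega
  rcases eq_or_lt_of_le ha with heq | hlt
  · -- same block
    obtain ⟨hx, hy⟩ := hilbert_block k j m m' hj hm hm' heq
    have hps : (2:ℤ)^(j+1) = 2^j * 2 := pow_succ 2 j
    constructor <;> [linarith [hx, (by positivity : (0:ℤ) < 2^j)];
      linarith [hy, (by positivity : (0:ℤ) < 2^j)]]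
  · -- adjacent blocks
    have haeq : m' / 4^j = m / 4^j + 1 := by omega
    set b := (m / 4^j + 1) * 4^j with hbdef
    have hbeq : b = 4^j*(m/4^j) + 4^j := by rw [hbdef]; ring
    have hb1 : m < b := by omega
    have hBb : 4^j * (m'/4^j) = b := by rw [haeq, hbeq]; ring
    have hb2 : b ≤ m' := by omega
    have hbpos : 1 ≤ b := by omega
    have hdb : b / 4^j = m / 4^j + 1 := Nat.mul_div_cancel _ h4
    have hsub : b - 1 + 1 = b := by omega
    have hdb1 : (b-1) / 4^j = m / 4^j := by
      apply Nat.div_eq_of_lt_le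
      · have hc : m / 4^j * 4^j = 4^j * (m/4^j) := Nat.mul_comm _ _
        omega
      · have hc : (m / 4^j + 1) * 4^j = b := hbdef.symm
        omega
    obtain ⟨h1x, h1y⟩ := hilbert_block k j m (b-1) hj hm (by omega) hdb1.symm
    obtain ⟨h2x, h2y⟩ := hilbert_adj k (b-1) (by omega)
    rw [show b - 1 + 1 = b from by omega] at h2x h2y
    obtain ⟨h3x, h3y⟩ := hilbert_block k j b m' hj (by omega) hm' (by rw [hdb, haeq])
    have hp : (0:ℤ) < 2^j := by positivity
    constructor
    · calc |((hilbert k m).1 : ℤ) - ((hilbert k m').1 : ℤ)|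
          ≤ |((hilbert k m).1 : ℤ) - ((hilbert k (b-1)).1 : ℤ)| +
            |((hilbert k (b-1)).1 : ℤ) - ((hilbert k b).1 : ℤ)| +
            |((hilbert k b).1 : ℤ) - ((hilbert k m').1 : ℤ)| := by
            have := abs_sub_le ((hilbert k m).1 : ℤ) ((hilbert k (b-1)).1 : ℤ) ((hilbert k m').1 : ℤ)
            have := abs_sub_le ((hilbert k (b-1)).1 : ℤ) ((hilbert k b).1 : ℤ) ((hilbert k m').1 : ℤ)
            linarith
      _ ≤ 2^(j+1) := by rw [abs_sub_comm ((hilbert k b).1 : ℤ)] at h2x; rw [pow_succ]; linarith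
    · calc |((hilbert k m).2 : ℤ) - ((hilbert k m').2 : ℤ)|
          ≤ |((hilbert k m).2 : ℤ) - ((hilbert k (b-1)).2 : ℤ)| +
            |((hilbert k (b-1)).2 : ℤ) - ((hilbert k b).2 : ℤ)| +
            |((hilbert k b).2 : ℤ) - ((hilbert k m').2 : ℤ)| := by
            have := abs_sub_le ((hilbert k m).2 : ℤ) ((hilbert k (b-1)).2 : ℤ) ((hilbert k m').2 : ℤ)
            have := abs_sub_le ((hilbert k (b-1)).2 : ℤ) ((hilbert k b).2 : ℤ) ((hilbert k m').2 : ℤ)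
            linarith
      _ ≤ 2^(j+1) := by rw [abs_sub_comm ((hilbert k b).2 : ℤ)] at h2y; rw [pow_succ]; linarith

lemma hilbert_key (k m m' : ℕ) (hle : m ≤ m') (hm' : m' < 4^k) :
    Real.sqrt ((((hilbert k m).1 : ℝ) - ((hilbert k m').1 : ℝ)) ^ 2 +
        (((hilbert k m).2 : ℝ) - ((hilbert k m').2 : ℝ)) ^ 2) ≤
      8 * Real.sqrt |(m : ℝ) - (m' : ℝ)| := by
  rcases eq_or_lt_of_le hle with rfl | hlt
  · simp
  · set d := m' - m with hddef
    have hd1 : 1 ≤ d := by omega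
    set jl := Nat.log 4 d with hjldef
    have hdlow : 4^jl ≤ d := Nat.pow_log_le_self 4 (by omega)
    have hdhi : d < 4^(jl+1) := Nat.lt_pow_succ_log_self (by norm_num) d
    have hjk : jl + 1 ≤ k := by
      have h1 : 4^jl < 4^k := lt_of_le_of_lt (le_trans hdlow (by omega)) hm'
      have := (Nat.pow_lt_pow_iff_right (by norm_num : 1 < 4)).mp h1
      omega
    obtain ⟨hx, hy⟩ := hilbert_close k (jl+1) m m' hjk hle hm' (by omega)
    have hxR : |((hilbert k m).1 : ℝ) - ((hilbert k m').1 : ℝ)| ≤ 2^(jl+2) := by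
      have := (Int.cast_le (R := ℝ)).mpr hx
      push_cast at this
      convert this using 2
    have hyR : |((hilbert k m).2 : ℝ) - ((hilbert k m').2 : ℝ)| ≤ 2^(jl+2) := by
      have := (Int.cast_le (R := ℝ)).mpr hy
      push_cast at this
      convert this using 2
    have h1 : (((hilbert k m).1 : ℝ) - ((hilbert k m').1 : ℝ))^2 ≤ ((2:ℝ)^(jl+2))^2 := by
      rw [← sq_abs]; exact pow_le_pow_left₀ (abs_nonneg _) hxR 2
    have h2 : (((hilbert k m).2 : ℝ) - ((hilbert k m').2 : ℝ))^2 ≤ ((2:ℝ)^(jl+2))^2 := by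
      rw [← sq_abs]; exact pow_le_pow_left₀ (abs_nonneg _) hyR 2
    have h3 : ((2:ℝ)^(jl+2))^2 = 4^jl * 16 := by
      rw [← pow_mul, show (jl+2)*2 = 2*jl + 4 from by ring, pow_add, pow_mul]
      norm_num
    have hd4 : (4:ℝ)^jl ≤ (d:ℝ) := by exact_mod_cast hdlow
    have hdpos : (0:ℝ) ≤ (d:ℝ) := by positivity
    have hsum : (((hilbert k m).1 : ℝ) - ((hilbert k m').1 : ℝ))^2 +
        (((hilbert k m).2 : ℝ) - ((hilbert k m').2 : ℝ))^2 ≤ 64 * (d:ℝ) := by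
      linarith
    have habs : |(m:ℝ) - (m':ℝ)| = (d:ℝ) := by
      rw [abs_sub_comm, abs_of_nonneg (by
        have : (m:ℝ) ≤ (m':ℝ) := by exact_mod_cast hle
        linarith)]
      rw [hddef]
      push_cast [Nat.cast_sub hle]
      ring
    rw [habs]
    calc Real.sqrt ((((hilbert k m).1 : ℝ) - ((hilbert k m').1 : ℝ))^2 +
            (((hilbert k m).2 : ℝ) - ((hilbert k m').2 : ℝ))^2)
        ≤ Real.sqrt (64 * (d:ℝ)) := Real.sqrt_le_sqrt hsum
      _ = 8 * Real.sqrt (d:ℝ) := by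
          rw [show (64:ℝ) * (d:ℝ) = 8^2 * (d:ℝ) from by ring,
            Real.sqrt_mul (by positivity), Real.sqrt_sq (by norm_num)]

/-- discrete locality / Hölder-type bound: there is a constant
`C` independent of the iteration `k` such that the Euclidean distance between
the grid cells `hilbert k m` and `hilbert k m'` is at most `C·√|m − m'|`. -/
theorem hilbert_locality :
    ∃ C : ℝ, 0 < C ∧ ∀ (k m m' : ℕ), m < 4 ^ k → m' < 4 ^ k →
      Real.sqrt ((((hilbert k m).1 : ℝ) - ((hilbert k m').1 : ℝ)) ^ 2 +
          (((hilbert k m).2 : ℝ) - ((hilbert k m').2 : ℝ)) ^ 2) ≤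
        C * Real.sqrt |(m : ℝ) - (m' : ℝ)| := by
  refine ⟨8, by norm_num, fun k m m' hm hm' => ?_⟩
  rcases le_total m m' with hle | hle
  · exact hilbert_key k m m' hle hm'
  · have := hilbert_key k m' m hle hm
    rw [show (((hilbert k m').1 : ℝ) - ((hilbert k m).1 : ℝ))^2 =
        (((hilbert k m).1 : ℝ) - ((hilbert k m').1 : ℝ))^2 from by ring,
      show (((hilbert k m').2 : ℝ) - ((hilbert k m).2 : ℝ))^2 =
        (((hilbert k m).2 : ℝ) - ((hilbert k m').2 : ℝ))^2 from by ring,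
      abs_sub_comm] at this
    exact this
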